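/- Let ρ > 0 and let a be a non-real quaternion with 0 < |a| < ρ. Define g(x) = log|ρ⁴ − xρ²(a + aᶜ) + x²|a|²| − log|x² − x(a + aᶜ) + |a|²| (the logarithm of the modulus of the ρ-Blaschke factor at the sphere S_a, up to an additive constant). Then Δg(0) = (2/(ρ⁴|a|⁴))·(ρ⁴ − |a|⁴)·(2|a|² − (a + aᶜ)²). -/

import Mathlib

/-- The standard real basis `1, i, j, k` of the quaternions viewed as ℝ⁴. -/
noncomputable def qBasis : Fin 4 → Quaternion ℝ
  | 0 => 1
  | 1 => ⟨0,1,0,0⟩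
  | 2 => ⟨0,0,1,0⟩
  | 3 => ⟨0,0,0,1⟩

/-- The Laplacian in the four real coordinates of a quaternionic variable. -/
noncomputable def qLap (u : Quaternion ℝ → ℝ) (x : Quaternion ℝ) : ℝ :=
  ∑ i : Fin 4, fderiv ℝ (fun y => fderiv ℝ u y (qBasis i)) x (qBasis i)

open Quaternion
open scoped RealInnerProductSpace

noncomputable section

/-- squared norm of the quadratic polynomial as polynomial in inner products -/
def qN (c₀ c₁ c₂ : ℝ) (x : Quaternion ℝ) : ℝ :=
  c₀*c₀ + 2*c₀*c₁*⟪(1:Quaternion ℝ),x⟫ + (c₁*c₁ - 2*c₀*c₂)*⟪x,x⟫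
    + 4*c₀*c₂*(⟪(1:Quaternion ℝ),x⟫*⟪(1:Quaternion ℝ),x⟫)
    + 2*c₁*c₂*(⟪x,x⟫*⟪(1:Quaternion ℝ),x⟫) + c₂*c₂*(⟪x,x⟫*⟪x,x⟫)

lemma qN_eq (c₀ c₁ c₂ : ℝ) (x : Quaternion ℝ) :
    qN c₀ c₁ c₂ x = ‖(c₀ : Quaternion ℝ) + x * (c₁ : Quaternion ℝ) + x^2 * (c₂ : Quaternion ℝ)‖^2 := by
  rw [pow_two, ← Quaternion.normSq_eq_norm_mul_self]
  simp only [qN, Quaternion.inner_def, Quaternion.inner_self]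
  simp only [Quaternion.normSq_def', pow_two, Quaternion.re_mul, Quaternion.imI_mul,
    Quaternion.imJ_mul, Quaternion.imK_mul, Quaternion.re_add, Quaternion.imI_add,
    Quaternion.imJ_add, Quaternion.imK_add, Quaternion.re_coe, Quaternion.imI_coe,
    Quaternion.imJ_coe, Quaternion.imK_coe, Quaternion.re_star, Quaternion.imI_star,
    Quaternion.imJ_star, Quaternion.imK_star, Quaternion.re_one, Quaternion.imI_one,
    Quaternion.imJ_one, Quaternion.imK_one]
  ring

lemma hasFDerivAt_inner_self (y : Quaternion ℝ) :
    HasFDerivAt (fun x : Quaternion ℝ => ⟪x,x⟫) ((2:ℝ) • innerSL ℝ y) y := by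
  have h := (hasFDerivAt_id (𝕜 := ℝ) y).inner ℝ (hasFDerivAt_id y)
  refine h.congr_fderiv ?_
  ext v
  simp only [ContinuousLinearMap.smul_apply, innerSL_apply_apply, ContinuousLinearMap.comp_apply,
    ContinuousLinearMap.prod_apply, ContinuousLinearMap.coe_id', id_eq, fderivInnerCLM_apply]
  rw [real_inner_comm v y, smul_eq_mul]
  ring

end
noncomputable section

def qA (c₀ c₁ c₂ : ℝ) (y : Quaternion ℝ) : ℝ :=
  2*c₀*c₁ + 8*c₀*c₂*⟪(1:Quaternion ℝ),y⟫ + 2*c₁*c₂*⟪y,y⟫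

def qB (c₀ c₁ c₂ : ℝ) (y : Quaternion ℝ) : ℝ :=
  2*(c₁*c₁-2*c₀*c₂) + 4*c₁*c₂*⟪(1:Quaternion ℝ),y⟫ + 4*c₂*c₂*⟪y,y⟫

def qDN (c₀ c₁ c₂ : ℝ) (y : Quaternion ℝ) : Quaternion ℝ →L[ℝ] ℝ :=
  qA c₀ c₁ c₂ y • innerSL ℝ (1:Quaternion ℝ) + qB c₀ c₁ c₂ y • innerSL ℝ y

lemma hasFDerivAt_qN (c₀ c₁ c₂ : ℝ) (y : Quaternion ℝ) :
    HasFDerivAt (qN c₀ c₁ c₂) (qDN c₀ c₁ c₂ y) y := by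
  have hp : HasFDerivAt (fun x : Quaternion ℝ => ⟪(1:Quaternion ℝ), x⟫)
      (innerSL ℝ (1:Quaternion ℝ)) y := (innerSL ℝ (1:Quaternion ℝ)).hasFDerivAt
  have hq := hasFDerivAt_inner_self y
  have H := (((((hasFDerivAt_const (c₀*c₀) y).add (hp.const_mul (2*c₀*c₁))).add
      (hq.const_mul (c₁*c₁-2*c₀*c₂))).add ((hp.mul hp).const_mul (4*c₀*c₂))).add
      ((hq.mul hp).const_mul (2*c₁*c₂))).add ((hq.mul hq).const_mul (c₂*c₂))
  refine H.congr_fderiv ?_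
  ext v
  simp only [qDN, qA, qB, ContinuousLinearMap.add_apply, ContinuousLinearMap.smul_apply,
    innerSL_apply_apply, ContinuousLinearMap.zero_apply, smul_eq_mul]
  ring

end
noncomputable section

def qU (c₀ c₁ c₂ : ℝ) : Quaternion ℝ → ℝ := fun x =>
  Real.log ‖(c₀ : Quaternion ℝ) + x * (c₁ : Quaternion ℝ) + x^2 * (c₂ : Quaternion ℝ)‖

lemma qU_eq (c₀ c₁ c₂ : ℝ) : qU c₀ c₁ c₂ = fun x => 2⁻¹ * Real.log (qN c₀ c₁ c₂ x) := by
  funext x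
  rw [qU, qN_eq, Real.log_pow]
  push_cast
  ring

lemma hasFDerivAt_qU {c₀ c₁ c₂ : ℝ} {y : Quaternion ℝ} (hNy : qN c₀ c₁ c₂ y ≠ 0) :
    HasFDerivAt (qU c₀ c₁ c₂) ((2 * qN c₀ c₁ c₂ y)⁻¹ • qDN c₀ c₁ c₂ y) y := by
  rw [qU_eq]
  have h := (((Real.hasDerivAt_log hNy).comp_hasFDerivAt y
      (hasFDerivAt_qN c₀ c₁ c₂ y)).const_mul (2⁻¹ : ℝ))
  refine h.congr_fderiv ?_
  ext v
  simp only [ContinuousLinearMap.smul_apply, smul_eq_mul, mul_inv]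
  ring

lemma qN_zero (c₀ c₁ c₂ : ℝ) : qN c₀ c₁ c₂ 0 = c₀*c₀ := by
  simp [qN]

lemma qN_cont (c₀ c₁ c₂ : ℝ) : Continuous (qN c₀ c₁ c₂) := by
  have h1 : Continuous fun x : Quaternion ℝ => ⟪(1:Quaternion ℝ), x⟫ :=
    (innerSL ℝ (1:Quaternion ℝ)).continuous
  have h2 : Continuous fun x : Quaternion ℝ => ⟪x, x⟫ := continuous_id.inner continuous_id
  unfold qN
  continuity

lemma eventually_qN_ne {c₀ : ℝ} (c₁ c₂ : ℝ) (hc₀ : c₀ ≠ 0) :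
    ∀ᶠ y in nhds (0 : Quaternion ℝ), qN c₀ c₁ c₂ y ≠ 0 := by
  have h0 : qN c₀ c₁ c₂ 0 ≠ 0 := by rw [qN_zero]; exact mul_ne_zero hc₀ hc₀
  exact ((qN_cont c₀ c₁ c₂).tendsto 0).eventually (eventually_ne_nhds h0)

def qG (c₀ c₁ c₂ : ℝ) (e : Quaternion ℝ) : Quaternion ℝ → ℝ := fun y =>
  (qA c₀ c₁ c₂ y * ⟪(1:Quaternion ℝ),e⟫ + qB c₀ c₁ c₂ y * ⟪e,y⟫) * (2 * qN c₀ c₁ c₂ y)⁻¹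

lemma fderiv_qU_eq {c₀ c₁ c₂ : ℝ} {y : Quaternion ℝ} (hNy : qN c₀ c₁ c₂ y ≠ 0)
    (e : Quaternion ℝ) : fderiv ℝ (qU c₀ c₁ c₂) y e = qG c₀ c₁ c₂ e y := by
  rw [(hasFDerivAt_qU hNy).fderiv]
  simp only [qG, qDN, ContinuousLinearMap.smul_apply, ContinuousLinearMap.add_apply,
    innerSL_apply_apply, smul_eq_mul]
  rw [real_inner_comm y e]
  ring

end
noncomputable section

lemma qG_hasFDerivAt {c₀ : ℝ} (c₁ c₂ : ℝ) (hc₀ : c₀ ≠ 0) (e : Quaternion ℝ) :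
    ∃ L : Quaternion ℝ →L[ℝ] ℝ, HasFDerivAt (qG c₀ c₁ c₂ e) L 0 ∧
      L e = (4*c₀*c₂*(⟪(1:Quaternion ℝ),e⟫*⟪(1:Quaternion ℝ),e⟫)
          + (c₁*c₁-2*c₀*c₂)*⟪e,e⟫ - 2*c₁*c₁*(⟪(1:Quaternion ℝ),e⟫*⟪(1:Quaternion ℝ),e⟫))/(c₀*c₀) := by
  have hp : HasFDerivAt (fun x : Quaternion ℝ => ⟪(1:Quaternion ℝ), x⟫)
      (innerSL ℝ (1:Quaternion ℝ)) 0 := (innerSL ℝ (1:Quaternion ℝ)).hasFDerivAt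
  have he : HasFDerivAt (fun y : Quaternion ℝ => ⟪e, y⟫) (innerSL ℝ e) 0 :=
    (innerSL ℝ e).hasFDerivAt
  have hq := hasFDerivAt_inner_self (0 : Quaternion ℝ)
  have hA : HasFDerivAt (qA c₀ c₁ c₂) _ 0 :=
    ((hasFDerivAt_const (2*c₀*c₁) 0).add (hp.const_mul (8*c₀*c₂))).add (hq.const_mul (2*c₁*c₂))
  have hB : HasFDerivAt (qB c₀ c₁ c₂) _ 0 :=
    ((hasFDerivAt_const (2*(c₁*c₁-2*c₀*c₂)) 0).add (hp.const_mul (4*c₁*c₂))).add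
      (hq.const_mul (4*c₂*c₂))
  have hnum : HasFDerivAt
      (fun y => qA c₀ c₁ c₂ y * ⟪(1:Quaternion ℝ),e⟫ + qB c₀ c₁ c₂ y * ⟪e,y⟫) _ 0 :=
    (hA.mul_const _).add (hB.mul he)
  have hNne : (2 * qN c₀ c₁ c₂ 0) ≠ 0 := by
    rw [qN_zero]; exact mul_ne_zero two_ne_zero (mul_ne_zero hc₀ hc₀)
  have hinv : HasFDerivAt (fun y => (2 * qN c₀ c₁ c₂ y)⁻¹) _ 0 :=
    (hasDerivAt_inv hNne).comp_hasFDerivAt 0 ((hasFDerivAt_qN c₀ c₁ c₂ 0).const_mul 2)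
  refine ⟨_, hnum.mul hinv, ?_⟩
  simp only [qA, qB, qN_zero, qDN, ContinuousLinearMap.add_apply, ContinuousLinearMap.smul_apply,
    innerSL_apply_apply, smul_eq_mul, inner_zero_right, inner_zero_left, mul_zero, zero_mul, add_zero,
    zero_add, ContinuousLinearMap.zero_apply]
  field_simp
  ring

end
noncomputable section

lemma qU_second {c₀ : ℝ} (c₁ c₂ : ℝ) (hc₀ : c₀ ≠ 0) (e : Quaternion ℝ) :
    ∃ G : Quaternion ℝ → ℝ, ∃ L : Quaternion ℝ →L[ℝ] ℝ,
      (∀ᶠ y in nhds (0 : Quaternion ℝ),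
        DifferentiableAt ℝ (qU c₀ c₁ c₂) y ∧ fderiv ℝ (qU c₀ c₁ c₂) y e = G y) ∧
      HasFDerivAt G L 0 ∧
      L e = (4*c₀*c₂*(⟪(1:Quaternion ℝ),e⟫*⟪(1:Quaternion ℝ),e⟫)
          + (c₁*c₁-2*c₀*c₂)*⟪e,e⟫ - 2*c₁*c₁*(⟪(1:Quaternion ℝ),e⟫*⟪(1:Quaternion ℝ),e⟫))/(c₀*c₀) := by
  obtain ⟨L, hL, hLe⟩ := qG_hasFDerivAt c₁ c₂ hc₀ e
  refine ⟨qG c₀ c₁ c₂ e, L, ?_, hL, hLe⟩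
  filter_upwards [eventually_qN_ne c₁ c₂ hc₀] with y hy
  exact ⟨(hasFDerivAt_qU hy).differentiableAt, fderiv_qU_eq hy e⟩

lemma qLap_sub (c₀ c₁ c₂ d₀ d₁ d₂ : ℝ) (hc₀ : c₀ ≠ 0) (hd₀ : d₀ ≠ 0) (e : Quaternion ℝ) :
    fderiv ℝ (fun y => fderiv ℝ (fun x => qU c₀ c₁ c₂ x - qU d₀ d₁ d₂ x) y e) 0 e =
      (4*c₀*c₂*(⟪(1:Quaternion ℝ),e⟫*⟪(1:Quaternion ℝ),e⟫)
          + (c₁*c₁-2*c₀*c₂)*⟪e,e⟫ - 2*c₁*c₁*(⟪(1:Quaternion ℝ),e⟫*⟪(1:Quaternion ℝ),e⟫))/(c₀*c₀)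
      - (4*d₀*d₂*(⟪(1:Quaternion ℝ),e⟫*⟪(1:Quaternion ℝ),e⟫)
          + (d₁*d₁-2*d₀*d₂)*⟪e,e⟫ - 2*d₁*d₁*(⟪(1:Quaternion ℝ),e⟫*⟪(1:Quaternion ℝ),e⟫))/(d₀*d₀) := by
  obtain ⟨G₁, L₁, hev₁, hG₁, hL₁⟩ := qU_second c₁ c₂ hc₀ e
  obtain ⟨G₂, L₂, hev₂, hG₂, hL₂⟩ := qU_second d₁ d₂ hd₀ e
  have hev : (fun y => fderiv ℝ (fun x => qU c₀ c₁ c₂ x - qU d₀ d₁ d₂ x) y e) =ᶠ[nhds 0]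
      fun y => G₁ y - G₂ y := by
    filter_upwards [hev₁, hev₂] with y h₁ h₂
    rw [fderiv_fun_sub h₁.1 h₂.1, ContinuousLinearMap.sub_apply, h₁.2, h₂.2]
  have hf : HasFDerivAt (fun y => fderiv ℝ (fun x => qU c₀ c₁ c₂ x - qU d₀ d₁ d₂ x) y e)
      (L₁ - L₂) 0 := (hG₁.sub hG₂).congr_of_eventuallyEq hev
  rw [hf.fderiv, ContinuousLinearMap.sub_apply, hL₁, hL₂]

end

/-- The Laplacian at `x = 0` of the logarithm of the modulus of the ρ-Blaschke
factor at the sphere `S_a` (up to an additive constant). -/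
theorem laplacian_log_spherical_blaschke_at_zero (ρ : ℝ) (hρ : 0 < ρ)
    (a : Quaternion ℝ) (ha_nonreal : a.im ≠ 0) (ha0 : 0 < ‖a‖) (ha : ‖a‖ < ρ) :
    qLap (fun x =>
        Real.log ‖((ρ^4 : ℝ) : Quaternion ℝ) - x * ((ρ^2 : ℝ) : Quaternion ℝ) * (a + star a)
            + x^2 * ((‖a‖^2 : ℝ) : Quaternion ℝ)‖ -
        Real.log ‖x^2 - x * (a + star a) + ((‖a‖^2 : ℝ) : Quaternion ℝ)‖) 0 =
      (2 / (ρ^4 * ‖a‖^4)) * (ρ^4 - ‖a‖^4) * (2 * ‖a‖^2 - ((a + star a).re)^2) := by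
  have hρ4 : (ρ^4 : ℝ) ≠ 0 := by positivity
  have hna : (‖a‖^2 : ℝ) ≠ 0 := by positivity
  have hfun : (fun x : Quaternion ℝ =>
        Real.log ‖((ρ^4 : ℝ) : Quaternion ℝ) - x * ((ρ^2 : ℝ) : Quaternion ℝ) * (a + star a)
            + x^2 * ((‖a‖^2 : ℝ) : Quaternion ℝ)‖ -
        Real.log ‖x^2 - x * (a + star a) + ((‖a‖^2 : ℝ) : Quaternion ℝ)‖) =
      fun x => qU (ρ^4) (-(ρ^2*(2*a.re))) (‖a‖^2) x - qU (‖a‖^2) (-(2*a.re)) 1 x := by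
    funext x
    unfold qU
    congr 2
    · simp only [Quaternion.self_add_star', Quaternion.coe_neg, Quaternion.coe_mul, mul_neg,
        ← mul_assoc, sub_eq_add_neg]
    · simp only [Quaternion.self_add_star', Quaternion.coe_neg, Quaternion.coe_one, mul_neg,
        mul_one, sub_eq_add_neg]
      abel
  rw [hfun]
  unfold qLap
  rw [Fin.sum_univ_four,
    qLap_sub _ _ _ _ _ _ hρ4 hna (qBasis 0), qLap_sub _ _ _ _ _ _ hρ4 hna (qBasis 1),
    qLap_sub _ _ _ _ _ _ hρ4 hna (qBasis 2), qLap_sub _ _ _ _ _ _ hρ4 hna (qBasis 3)]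
  have h0 : ⟪(1:Quaternion ℝ), qBasis 0⟫ = 1 := by
    simp [qBasis, Quaternion.inner_def]
  have h1 : ⟪(1:Quaternion ℝ), qBasis 1⟫ = 0 := by
    simp only [Quaternion.inner_def, Quaternion.re_mul, Quaternion.re_star, Quaternion.imI_star, Quaternion.imJ_star,
      Quaternion.imK_star, Quaternion.imI_one, Quaternion.imJ_one, Quaternion.imK_one]
    simp [qBasis, Quaternion.inner_def, Quaternion.re_mul]
  have h2 : ⟪(1:Quaternion ℝ), qBasis 2⟫ = 0 := by
    simp only [Quaternion.inner_def, Quaternion.re_mul, Quaternion.re_star, Quaternion.imI_star, Quaternion.imJ_star,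
      Quaternion.imK_star, Quaternion.imI_one, Quaternion.imJ_one, Quaternion.imK_one]
    simp [qBasis, Quaternion.inner_def, Quaternion.re_mul]
  have h3 : ⟪(1:Quaternion ℝ), qBasis 3⟫ = 0 := by
    simp only [Quaternion.inner_def, Quaternion.re_mul, Quaternion.re_star, Quaternion.imI_star, Quaternion.imJ_star,
      Quaternion.imK_star, Quaternion.imI_one, Quaternion.imJ_one, Quaternion.imK_one]
    simp [qBasis, Quaternion.inner_def, Quaternion.re_mul]
  have g0 : ⟪qBasis 0, qBasis 0⟫ = 1 := by
    simp [qBasis, Quaternion.inner_def]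
  have g1 : ⟪qBasis 1, qBasis 1⟫ = 1 := by
    simp only [Quaternion.inner_def, Quaternion.re_mul, Quaternion.re_star, Quaternion.imI_star, Quaternion.imJ_star,
      Quaternion.imK_star, Quaternion.imI_one, Quaternion.imJ_one, Quaternion.imK_one]
    simp [qBasis, Quaternion.inner_def, Quaternion.re_mul]
  have g2 : ⟪qBasis 2, qBasis 2⟫ = 1 := by
    simp only [Quaternion.inner_def, Quaternion.re_mul, Quaternion.re_star, Quaternion.imI_star, Quaternion.imJ_star,
      Quaternion.imK_star, Quaternion.imI_one, Quaternion.imJ_one, Quaternion.imK_one]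
    simp [qBasis, Quaternion.inner_def, Quaternion.re_mul]
  have g3 : ⟪qBasis 3, qBasis 3⟫ = 1 := by
    simp only [Quaternion.inner_def, Quaternion.re_mul, Quaternion.re_star, Quaternion.imI_star, Quaternion.imJ_star,
      Quaternion.imK_star, Quaternion.imI_one, Quaternion.imJ_one, Quaternion.imK_one]
    simp [qBasis, Quaternion.inner_def, Quaternion.re_mul]
  rw [h0, h1, h2, h3, g0, g1, g2, g3]
  have hre : (a + star a).re = 2 * a.re := by
    simp [Quaternion.self_add_star']
  rw [hre]
  have h4 : ‖a‖^4 = ‖a‖^2 * ‖a‖^2 := by ring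
  field_simp
  ring
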